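/- Let (E,d) be a complete metric space satisfying the median inequality, let G be a group of isometries of E, and let H be a normal subgroup of G such that the quotient G/H is cyclic (equivalently, there exists ε ∈ G such that G is generated by H together with ε). If G is a GAF and H is a GAG, then G is a GAG. -/

import Mathlib

/-- Let `E` be a complete metric space satisfying the median inequality, `G` a
group of isometries of `E`, and `H` a normal subgroup of `G` with cyclic
quotient `G/H` (i.e. there is `ε ∈ G` such that `G` is generated by `H`
together with `ε`). If `G` is a GAF and `H` is a GAG then `G` is a GAG. -/
theorem gag_of_normal_gag_cyclic_quotient
    {E : Type*} [MetricSpace E] [CompleteSpace E]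
    (hmed : ∀ x y : E, ∃ m : E, ∀ z : E,
      dist z m ^ 2 ≤ (dist z x ^ 2 + dist z y ^ 2) / 2 - dist x y ^ 2 / 4)
    (G H : Subgroup (Equiv.Perm E))
    (hiso : ∀ g ∈ G, ∀ x y : E, dist (g x) (g y) = dist x y)
    (hHG : H ≤ G)
    (hnorm : ∀ g ∈ G, ∀ h ∈ H, g * h * g⁻¹ ∈ H)
    (hcyc : ∃ ε ∈ G, G ≤ Subgroup.closure (insert ε (H : Set (Equiv.Perm E))))
    (hGAF : ∀ g ∈ G, ∃ x : E, g x = x)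
    (hHGAG : ∃ x : E, ∀ h ∈ H, h x = x) :
    ∃ x : E, ∀ g ∈ G, g x = x := by
  obtain ⟨ε, hεG, hgen⟩ := hcyc
  obtain ⟨x₀, hx₀⟩ := hHGAG
  set F : Set E := {x | ∀ h ∈ H, h x = x} with hFdef
  have hx₀F : x₀ ∈ F := hx₀
  have hFne : F.Nonempty := ⟨x₀, hx₀F⟩
  have hisoH : ∀ h ∈ H, ∀ x y : E, dist (h x) (h y) = dist x y :=
    fun h hh => hiso h (hHG hh)
  -- F is closed
  have hFclosed : IsClosed F := by
    have hF : F = ⋂ h ∈ (H : Set (Equiv.Perm E)), {x : E | h x = x} := by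
      ext x
      simp only [hFdef, Set.mem_setOf_eq, Set.mem_iInter, SetLike.mem_coe]
    rw [hF]
    exact isClosed_biInter fun h hh =>
      isClosed_eq (Isometry.of_dist_eq (hisoH h hh)).continuous continuous_id
  -- medians of points of F lie in F
  have hmedF : ∀ x ∈ F, ∀ y ∈ F, ∃ m ∈ F, ∀ z : E,
      dist z m ^ 2 ≤ (dist z x ^ 2 + dist z y ^ 2) / 2 - dist x y ^ 2 / 4 := by
    intro x hx y hy
    obtain ⟨m, hm⟩ := hmed x y
    refine ⟨m, ?_, hm⟩
    intro h hh
    have hdx : dist x m ^ 2 ≤ dist x y ^ 2 / 4 := by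
      have h1 := hm x
      rw [dist_self] at h1
      nlinarith
    have hdy : dist y m ^ 2 ≤ dist x y ^ 2 / 4 := by
      have h1 := hm y
      rw [dist_self, dist_comm y x] at h1
      nlinarith
    have e1 : dist (h m) x = dist x m := by
      conv_lhs => rw [← hx h hh]
      rw [hisoH h hh m x, dist_comm]
    have e2 : dist (h m) y = dist y m := by
      conv_lhs => rw [← hy h hh]
      rw [hisoH h hh m y, dist_comm]
    have key := hm (h m)
    rw [e1, e2] at key
    have h0 : dist (h m) m = 0 := by
      have hn : (0:ℝ) ≤ dist (h m) m := dist_nonneg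
      nlinarith
    exact dist_eq_zero.mp h0
  -- ε maps F into F
  have hεF : ∀ x ∈ F, (ε : Equiv.Perm E) x ∈ F := by
    intro x hx h hh
    have h' : ε⁻¹ * h * ε ∈ H := by
      have := hnorm ε⁻¹ (inv_mem hεG) h hh
      simpa using this
    have hx' := hx _ h'
    simp only [Equiv.Perm.mul_apply] at hx'
    calc h (ε x) = ε (ε⁻¹ (h (ε x))) := (Equiv.apply_symm_apply ε _).symm
      _ = ε x := by rw [hx']
  -- a fixed point of ε
  obtain ⟨p, hp⟩ := hGAF ε hεG
  set δ := Metric.infDist p F with hδdef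
  have hδ0 : 0 ≤ δ := Metric.infDist_nonneg
  -- minimizing sequence
  have hseq : ∀ n : ℕ, ∃ y ∈ F, dist p y < δ + 1 / ((n : ℝ) + 1) := by
    intro n
    have hpos : (0:ℝ) < 1 / ((n : ℝ) + 1) := by positivity
    exact (Metric.infDist_lt_iff hFne).mp (by linarith)
  choose u huF hud using hseq
  -- key quadratic estimate
  have key : ∀ x ∈ F, ∀ y ∈ F,
      dist x y ^ 2 ≤ 2 * dist p x ^ 2 + 2 * dist p y ^ 2 - 4 * δ ^ 2 := by
    intro x hx y hy
    obtain ⟨m, hmF, hm⟩ := hmedF x hx y hy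
    have h1 := hm p
    have h2 : δ ≤ dist p m := Metric.infDist_le_dist_of_mem hmF
    have h3 : δ ^ 2 ≤ dist p m ^ 2 := by nlinarith
    nlinarith
  -- the sequence is Cauchy
  have hcauchy : CauchySeq u := by
    rw [Metric.cauchySeq_iff]
    intro e he
    have he2 : (0:ℝ) < e ^ 2 := by positivity
    obtain ⟨N, hN⟩ := exists_nat_gt (max 1 ((8 * δ + 8) / e ^ 2))
    have hN1 : (1:ℝ) < N := lt_of_le_of_lt (le_max_left _ _) hN
    have hNpos : (0:ℝ) < N := by linarith
    have htpos : (0:ℝ) < 1 / (N:ℝ) := by positivity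
    have htle1 : 1 / (N:ℝ) ≤ 1 := by
      rw [div_le_one hNpos]; linarith
    have hfin : (8 * δ + 8) / (N:ℝ) < e ^ 2 := by
      rw [div_lt_iff₀ hNpos]
      have := lt_of_le_of_lt (le_max_right (1:ℝ) _) hN
      rw [div_lt_iff₀ he2] at this
      nlinarith
    refine ⟨N, fun m hm n hn => ?_⟩
    have bound : ∀ k : ℕ, N ≤ k → dist p (u k) < δ + 1 / (N:ℝ) := by
      intro k hk
      refine lt_of_lt_of_le (hud k) ?_
      have : 1 / ((k:ℝ) + 1) ≤ 1 / (N:ℝ) := by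
        apply one_div_le_one_div_of_le hNpos
        have : (N:ℝ) ≤ (k:ℝ) := Nat.cast_le.mpr hk
        linarith
      linarith
    have h2 := bound m hm
    have h3 := bound n hn
    have h1 := key (u m) (huF m) (u n) (huF n)
    have hnm : (0:ℝ) ≤ dist p (u m) := dist_nonneg
    have hnn : (0:ℝ) ≤ dist p (u n) := dist_nonneg
    have hfin' : 8 * δ * (1 / (N:ℝ)) + 8 * (1 / (N:ℝ)) < e ^ 2 := by
      rw [show 8 * δ * (1 / (N:ℝ)) + 8 * (1 / (N:ℝ)) = (8 * δ + 8) / (N:ℝ) from by ring]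
      exact hfin
    have hsq : dist (u m) (u n) ^ 2 < e ^ 2 := by
      nlinarith [pow_lt_pow_left₀ h2 hnm two_ne_zero, pow_lt_pow_left₀ h3 hnn two_ne_zero,
        mul_le_of_le_one_left htpos.le htle1, hδ0, htpos, hfin']
    exact lt_of_pow_lt_pow_left₀ 2 he.le hsq
  -- the limit q is the projection of p on F
  obtain ⟨q, hq⟩ := cauchySeq_tendsto_of_complete hcauchy
  have hqF : q ∈ F := hFclosed.mem_of_tendsto hq (Filter.Eventually.of_forall huF)
  have hdq : dist p q = δ := by
    have h1 : δ ≤ dist p q := Metric.infDist_le_dist_of_mem hqF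
    have h2 : Filter.Tendsto (fun n => dist p (u n)) Filter.atTop (nhds (dist p q)) :=
      Filter.Tendsto.dist tendsto_const_nhds hq
    have h3 : Filter.Tendsto (fun n : ℕ => δ + 1 / ((n:ℝ) + 1)) Filter.atTop (nhds (δ + 0)) :=
      tendsto_const_nhds.add tendsto_one_div_add_atTop_nhds_zero_nat
    have h4 : dist p q ≤ δ + 0 :=
      le_of_tendsto_of_tendsto' h2 h3 fun n => (hud n).le
    linarith
  -- uniqueness of the projection
  have huniq : ∀ y ∈ F, dist p y = δ → y = q := by
    intro y hy hdy
    obtain ⟨m, hmF, hm⟩ := hmedF y hy q hqF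
    have h1 := hm p
    have h2 : δ ≤ dist p m := Metric.infDist_le_dist_of_mem hmF
    have h0 : dist y q = 0 := by
      have hn : (0:ℝ) ≤ dist y q := dist_nonneg
      nlinarith [hdq, hdy]
    exact dist_eq_zero.mp h0
  -- ε fixes q
  have hεq : (ε : Equiv.Perm E) q = q := by
    apply huniq (ε q) (hεF q hqF)
    calc dist p (ε q) = dist (ε p) (ε q) := by rw [hp]
      _ = dist p q := hiso ε hεG p q
      _ = δ := hdq
  -- conclude via the generating set
  refine ⟨q, fun g hg => ?_⟩
  have hsub : insert ε (H : Set (Equiv.Perm E)) ⊆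
      (MulAction.stabilizer (Equiv.Perm E) q : Set (Equiv.Perm E)) := by
    intro g hg
    rcases hg with rfl | hgH
    · simpa [MulAction.mem_stabilizer_iff, Equiv.Perm.smul_def] using hεq
    · simpa [MulAction.mem_stabilizer_iff, Equiv.Perm.smul_def] using hqF g hgH
  have hmem := (Subgroup.closure_le _).mpr hsub (hgen hg)
  simpa [MulAction.mem_stabilizer_iff, Equiv.Perm.smul_def] using hmem
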